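/- Suppose g : X × Y → ℝ is convex (jointly) and differentiable, and h : X × Y → ℝ is differentiable, convex in x for each fixed y, and concave in y for each fixed x. If z* = (x*, y*) ∈ X × Y is a Nash equilibrium of the game where Player 1 maximizes u₁ = −g − h over x ∈ X and Player 2 maximizes u₂ = −g + h over y ∈ Y, then Δ(z*) = 0, where Δ(z) = sup_{(x̃,ỹ)∈X×Y} [g(z) − g(x̃,ỹ) + h(x,ỹ) − h(x̃,y)]. -/

import Mathlib

open Filter Set

private lemma deriv_le_of_slope_le {φ : ℝ → ℝ} {d c : ℝ} (hφ : HasDerivAt φ d 0)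
    (hs : ∀ t : ℝ, 0 < t → t ≤ 1 → (φ t - φ 0) / t ≤ c) : d ≤ c := by
  have h := hasDerivAt_iff_tendsto_slope.mp hφ
  have h' : Tendsto (slope φ 0) (nhdsWithin 0 (Set.Ioi 0)) (nhds d) :=
    h.mono_left (nhdsWithin_mono _ (fun x hx => ne_of_gt hx))
  refine le_of_tendsto h' ?_
  filter_upwards [Ioc_mem_nhdsGT (by norm_num : (0:ℝ) < 1)] with t ht
  have : slope φ 0 t = (φ t - φ 0) / t := by
    simp [slope_def_field, div_eq_inv_mul]
  rw [this]
  exact hs t ht.1 ht.2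

private lemma le_deriv_of_le_slope {φ : ℝ → ℝ} {d c : ℝ} (hφ : HasDerivAt φ d 0)
    (hs : ∀ t : ℝ, 0 < t → t ≤ 1 → c ≤ (φ t - φ 0) / t) : c ≤ d := by
  have := deriv_le_of_slope_le hφ.neg (c := -c) (by
    intro t ht ht1
    have := hs t ht ht1
    have h2 : (-φ t - -φ 0) / t = -((φ t - φ 0) / t) := by ring
    simp only [Pi.neg_apply]
    rw [h2]; linarith)
  linarith

private lemma line_hasDerivAt {G : Type*} [NormedAddCommGroup G] [NormedSpace ℝ G]
    (f : G → ℝ) (hf : Differentiable ℝ f) (z w : G) :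
    HasDerivAt (fun t : ℝ => f (z + t • w)) (fderiv ℝ f z w) 0 := by
  have h1 : HasDerivAt (fun t : ℝ => z + t • w) w 0 := by
    simpa using ((hasDerivAt_id (0:ℝ)).smul_const w).const_add z
  have h2 : HasFDerivAt f (fderiv ℝ f (z + (0:ℝ) • w)) (z + (0:ℝ) • w) :=
    (hf _).hasFDerivAt
  have := h2.comp_hasDerivAt 0 h1
  simp only [zero_smul, add_zero] at this
  exact this

theorem nash_implies_delta_zero {E F : Type*} [NormedAddCommGroup E] [InnerProductSpace ℝ E]
    [NormedAddCommGroup F] [InnerProductSpace ℝ F]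
    (X : Set E) (Y : Set F) (hXc : Convex ℝ X) (hYc : Convex ℝ Y)
    (hXcp : IsCompact X) (hYcp : IsCompact Y)
    (g h : E × F → ℝ)
    (hg_diff : Differentiable ℝ g) (hh_diff : Differentiable ℝ h)
    (hg_conv : ConvexOn ℝ (X ×ˢ Y) g)
    (hh_cx : ∀ y ∈ Y, ConvexOn ℝ X (fun x => h (x, y)))
    (hh_cy : ∀ x ∈ X, ConcaveOn ℝ Y (fun y => h (x, y)))
    (xs : E) (ys : F) (hxs : xs ∈ X) (hys : ys ∈ Y)
    (hNash₁ : ∀ x ∈ X, -g (x, ys) - h (x, ys) ≤ -g (xs, ys) - h (xs, ys))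
    (hNash₂ : ∀ y ∈ Y, -g (xs, y) + h (xs, y) ≤ -g (xs, ys) + h (xs, ys)) :
    sSup {v : ℝ | ∃ xt ∈ X, ∃ yt ∈ Y,
      v = g (xs, ys) - g (xt, yt) + h (xs, yt) - h (xt, ys)} = 0 := by
  set S := {v : ℝ | ∃ xt ∈ X, ∃ yt ∈ Y,
      v = g (xs, ys) - g (xt, yt) + h (xs, yt) - h (xt, ys)} with hS
  have h0 : (0:ℝ) ∈ S := ⟨xs, hxs, ys, hys, by ring⟩
  -- main bound: every element of S is ≤ 0
  have hbound : ∀ v ∈ S, v ≤ 0 := by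
    rintro v ⟨xt, hxt, yt, hyt, rfl⟩
    set zs : E × F := (xs, ys) with hzs
    set w1 : E × F := (xt - xs, 0) with hw1
    set w2 : E × F := (0, yt - ys) with hw2
    -- segment membership facts
    have hsegX : ∀ t : ℝ, 0 < t → t ≤ 1 → xs + t • (xt - xs) ∈ X := by
      intro t ht ht1
      have : xs + t • (xt - xs) = (1 - t) • xs + t • xt := by
        rw [smul_sub, sub_smul, one_smul]; abel
      rw [this]
      exact hXc hxs hxt (by linarith) (le_of_lt ht) (by ring)
    have hsegY : ∀ t : ℝ, 0 < t → t ≤ 1 → ys + t • (yt - ys) ∈ Y := by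
      intro t ht ht1
      have : ys + t • (yt - ys) = (1 - t) • ys + t • yt := by
        rw [smul_sub, sub_smul, one_smul]; abel
      rw [this]
      exact hYc hys hyt (by linarith) (le_of_lt ht) (by ring)
    -- derivatives
    have dG1 := line_hasDerivAt g hg_diff zs w1
    have dG2 := line_hasDerivAt g hg_diff zs w2
    have dG12 := line_hasDerivAt g hg_diff zs (w1 + w2)
    have dH1 := line_hasDerivAt h hh_diff zs w1
    have dH2 := line_hasDerivAt h hh_diff zs w2
    -- point rewrites
    have e1 : ∀ t : ℝ, zs + t • w1 = (xs + t • (xt - xs), ys) := by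
      intro t; simp [hzs, hw1, Prod.ext_iff]
    have e2 : ∀ t : ℝ, zs + t • w2 = (xs, ys + t • (yt - ys)) := by
      intro t; simp [hzs, hw2, Prod.ext_iff]
    have e12 : ∀ t : ℝ, zs + t • (w1 + w2) = (xs + t • (xt - xs), ys + t • (yt - ys)) := by
      intro t; simp [hzs, hw1, hw2, Prod.ext_iff]
    -- (i) Nash₁ first-order: 0 ≤ Dg w1 + Dh w1
    have hi : 0 ≤ fderiv ℝ g zs w1 + fderiv ℝ h zs w1 := by
      refine le_deriv_of_le_slope (dG1.add dH1) ?_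
      intro t ht ht1
      have hx := hNash₁ _ (hsegX t ht ht1)
      simp only [Pi.add_apply]
      rw [e1 t]
      have : zs = (xs, ys) := rfl
      rw [this]
      have h0' : zs + (0:ℝ) • w1 = (xs, ys) := by simp [hzs]
      apply div_nonneg _ (le_of_lt ht)
      simp only [zero_smul, add_zero, hzs] at *
      linarith
    -- (ii) Nash₂ first-order: 0 ≤ Dg w2 - Dh w2
    have hii : 0 ≤ fderiv ℝ g zs w2 - fderiv ℝ h zs w2 := by
      refine le_deriv_of_le_slope (dG2.sub dH2) ?_
      intro t ht ht1
      have hy := hNash₂ _ (hsegY t ht ht1)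
      simp only [Pi.sub_apply]
      rw [e2 t]
      apply div_nonneg _ (le_of_lt ht)
      simp only [zero_smul, add_zero, hzs] at *
      linarith
    -- (iii) g convexity: Dg (w1 + w2) ≤ g(xt,yt) - g(xs,ys)
    have hiii : fderiv ℝ g zs (w1 + w2) ≤ g (xt, yt) - g (xs, ys) := by
      refine deriv_le_of_slope_le dG12 ?_
      intro t ht ht1
      rw [e12 t]
      have hmem1 : ((xs, ys) : E × F) ∈ X ×ˢ Y := ⟨hxs, hys⟩
      have hmem2 : ((xt, yt) : E × F) ∈ X ×ˢ Y := ⟨hxt, hyt⟩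
      have hcv := hg_conv.2 hmem1 hmem2
        (show (0:ℝ) ≤ 1 - t by linarith) (show (0:ℝ) ≤ t from le_of_lt ht) (by ring)
      have hpt : (1 - t) • ((xs, ys) : E × F) + t • ((xt, yt) : E × F)
          = (xs + t • (xt - xs), ys + t • (yt - ys)) := by
        simp [Prod.ext_iff, smul_sub, sub_smul]; constructor <;> abel
      rw [hpt] at hcv
      rw [div_le_iff₀ ht]
      simp only [zero_smul, add_zero, hzs, smul_eq_mul] at *
      linarith
    -- (iv) h(·, ys) convexity: Dh w1 ≤ h(xt,ys) - h(xs,ys)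
    have hiv : fderiv ℝ h zs w1 ≤ h (xt, ys) - h (xs, ys) := by
      refine deriv_le_of_slope_le dH1 ?_
      intro t ht ht1
      rw [e1 t]
      have hcv := (hh_cx ys hys).2 hxs hxt
        (show (0:ℝ) ≤ 1 - t by linarith) (show (0:ℝ) ≤ t from le_of_lt ht) (by ring)
      have hpt : (1 - t) • xs + t • xt = xs + t • (xt - xs) := by
        rw [smul_sub, sub_smul, one_smul]; abel
      rw [hpt] at hcv
      rw [div_le_iff₀ ht]
      simp only [zero_smul, add_zero, hzs, smul_eq_mul] at *
      linarith
    -- (v) h(xs, ·) concavity: h(xs,yt) - h(xs,ys) ≤ Dh w2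
    have hv : h (xs, yt) - h (xs, ys) ≤ fderiv ℝ h zs w2 := by
      refine le_deriv_of_le_slope dH2 ?_
      intro t ht ht1
      rw [e2 t]
      have hcv := (hh_cy xs hxs).2 hys hyt
        (show (0:ℝ) ≤ 1 - t by linarith) (show (0:ℝ) ≤ t from le_of_lt ht) (by ring)
      have hpt : (1 - t) • ys + t • yt = ys + t • (yt - ys) := by
        rw [smul_sub, sub_smul, one_smul]; abel
      rw [hpt] at hcv
      rw [le_div_iff₀ ht]
      simp only [zero_smul, add_zero, hzs, smul_eq_mul] at *
      linarith
    -- combine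
    have hlin : fderiv ℝ g zs (w1 + w2) = fderiv ℝ g zs w1 + fderiv ℝ g zs w2 :=
      (fderiv ℝ g zs).map_add w1 w2
    rw [hlin] at hiii
    linarith
  have hbdd : BddAbove S := ⟨0, hbound⟩
  exact le_antisymm (csSup_le ⟨0, h0⟩ hbound) (le_csSup hbdd h0)
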